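/- Let S be an additively reduced, additively Furstenberg semidomain with A₊(S) = S^×, and let G be a torsion-free abelian group. Then every binomial f = s_0 x^{g_0} + s_1 x^{g_1} ∈ S[G] (s_0, s_1 nonzero, g_0 ≠ g_1) with s_0 or s_1 a unit of S is irreducible. -/

import Mathlib

/-- Witness that `S` is a semidomain: an injective semiring hom into an integral domain. -/
structure SemidomainWitness (S : Type*) [CommSemiring S] where
  D : Type
  [commRing : CommRing D]
  [isDomain : IsDomain D]
  emb : S →+* D
  inj : Function.Injective emb

/-- `S` is a semidomain, i.e. (isomorphic to) a subsemiring of an integral domain. -/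
def IsSemidomain (S : Type*) [CommSemiring S] : Prop := Nonempty (SemidomainWitness S)

/-- `S` is additively reduced: `0` is the only additively invertible element. -/
def AddReduced (S : Type*) [AddZeroClass S] : Prop := ∀ a b : S, a + b = 0 → a = 0

/-- `s` is an atom of the additive monoid `(S, +)` (for `S` additively reduced):
it is nonzero and cannot be written as a sum of two nonzero elements. -/
def IsAddAtom {S : Type*} [AddZeroClass S] (s : S) : Prop :=
  s ≠ 0 ∧ ∀ a b : S, s = a + b → a = 0 ∨ b = 0

/-- `S` is additively Furstenberg: every nonzero element is divisible in `(S, +)`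
by an additive atom. -/
def AddFurstenberg (S : Type*) [AddZeroClass S] : Prop :=
  ∀ s : S, s ≠ 0 → ∃ a t : S, IsAddAtom a ∧ s = a + t


section GroupAlg
variable {S : Type*} [CommSemiring S] {G : Type*} [AddCommGroup G]

/-- A monomial `s·x^g` in the group semidomain `S[G]`. -/
def IsMonomial (f : AddMonoidAlgebra S G) : Prop :=
  ∃ (g : G) (s : S), f = AddMonoidAlgebra.single g s

/-- `f` is monolithic: every factorization of `f` in `S[G]` has a monomial factor. -/
def Monolithic (f : AddMonoidAlgebra S G) : Prop :=
  f ≠ 0 ∧ ∀ p q : AddMonoidAlgebra S G, f = p * q → IsMonomial p ∨ IsMonomial q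

end GroupAlg


private lemma aux_tors {G : Type*} [AddCommGroup G]
    (htf : ∀ (g : G) (n : ℕ), n ≠ 0 → n • g = 0 → g = 0)
    {a a' b b' : G} (h1 : a + b = a' + b') (h2 : a + b' = a' + b) : a = a' := by
  have h4 : a + a = a' + a' := by
    apply add_right_cancel (b := b + b')
    calc a + a + (b + b') = a + b + (a + b') := by abel
    _ = a' + b' + (a' + b) := by rw [h1, h2]
    _ = a' + a' + (b + b') := by abel
  have h5 : (2 : ℕ) • (a - a') = 0 := by
    rw [two_nsmul]
    have : a - a' + (a - a') = a + a - (a' + a') := by abel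
    rw [this, h4, sub_self]
  exact sub_eq_zero.mp (htf (a - a') 2 (by norm_num) h5)

/-- For `S` additively reduced, additively Furstenberg with `A₊(S) = S^×` and `G`
torsion-free abelian: a binomial whose (nonzero) coefficients include a unit is irreducible. -/
theorem binomial_irreducible_of_unit_coeff
    {S : Type*} [CommSemiring S] {G : Type*} [AddCommGroup G]
    (hS : IsSemidomain S) (hred : AddReduced S) (hfur : AddFurstenberg S)
    (hatoms : ∀ a : S, IsAddAtom a ↔ IsUnit a)
    (htf : ∀ (g : G) (n : ℕ), n ≠ 0 → n • g = 0 → g = 0)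
    (s₀ s₁ : S) (g₀ g₁ : G) (hs₀ : s₀ ≠ 0) (hs₁ : s₁ ≠ 0) (hgg : g₀ ≠ g₁)
    (hu : IsUnit s₀ ∨ IsUnit s₁)
    (f : AddMonoidAlgebra S G)
    (hf : f = AddMonoidAlgebra.single g₀ s₀ + AddMonoidAlgebra.single g₁ s₁) :
    Irreducible f := by
    classical
  obtain ⟨W⟩ := hS
  letI := W.commRing
  letI := W.isDomain
  have hnzd : ∀ x y : S, x ≠ 0 → y ≠ 0 → x * y ≠ 0 := by
    intro x y hx hy hxy
    have ex : W.emb x ≠ 0 := fun h => hx (W.inj (h.trans (map_zero W.emb).symm))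
    have ey : W.emb y ≠ 0 := fun h => hy (W.inj (h.trans (map_zero W.emb).symm))
    exact mul_ne_zero ex ey (by rw [← map_mul, hxy, map_zero])
  have hsum0 : ∀ {ι : Type _} (s : Finset ι) (F : ι → S), (∑ i ∈ s, F i) = 0 →
      ∀ i ∈ s, F i = 0 := by
    intro ι s
    induction s using Finset.cons_induction with
    | empty => intro F _ i hi; simp at hi
    | cons a s ha ih =>
      intro F hF i hi
      rw [Finset.sum_cons] at hF
      have h1 : F a = 0 := hred _ _ hF
      have h2 : (∑ j ∈ s, F j) = 0 := by rwa [h1, zero_add] at hF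
      rcases Finset.mem_cons.mp hi with rfl | hi
      · exact h1
      · exact ih F h2 i hi
  have hmul_ne : ∀ (p q : AddMonoidAlgebra S G) (a b : G),
      p.coeff a ≠ 0 → q.coeff b ≠ 0 → (p * q).coeff (a + b) ≠ 0 := by
    intro p q a b hpa hqb h
    rw [AddMonoidAlgebra.mul_apply] at h
    simp only [Finsupp.sum] at h
    have h1 := hsum0 _ _ h a (Finsupp.mem_support_iff.mpr hpa)
    have h2 := hsum0 _ _ h1 b (Finsupp.mem_support_iff.mpr hqb)
    simp only [if_pos rfl] at h2
    exact hnzd _ _ hpa hqb h2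
  have hf₀ : f.coeff g₀ = s₀ := by
    rw [hf]
    show Finsupp.single g₀ s₀ g₀ + Finsupp.single g₁ s₁ g₀ = s₀
    rw [Finsupp.single_eq_same, Finsupp.single_eq_of_ne' (Ne.symm hgg), add_zero]
  have hf₁ : f.coeff g₁ = s₁ := by
    rw [hf]
    show Finsupp.single g₀ s₀ g₁ + Finsupp.single g₁ s₁ g₁ = s₁
    rw [Finsupp.single_eq_same, Finsupp.single_eq_of_ne' hgg, zero_add]
  have hfsupp : ∀ x : G, f.coeff x ≠ 0 → x = g₀ ∨ x = g₁ := by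
    intro x hx
    by_contra hc
    push_neg at hc
    apply hx
    rw [hf]
    show Finsupp.single g₀ s₀ x + Finsupp.single g₁ s₁ x = 0
    rw [Finsupp.single_eq_of_ne' (fun h => hc.1 h.symm),
      Finsupp.single_eq_of_ne' (fun h => hc.2 h.symm), add_zero]
  have hfne : f ≠ 0 := fun h => hs₀ (by rw [← hf₀, h]; rfl)
  constructor
  · rintro ⟨u, hufu⟩
    have hmul : f * ↑u⁻¹ = 1 := by rw [← hufu]; exact u.mul_inv
    have hone : (1 : S) ≠ 0 := fun h => hs₀ (by rw [← mul_one s₀, h, mul_zero])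
    have hv : (↑u⁻¹ : AddMonoidAlgebra S G) ≠ 0 := by
      intro h
      rw [h, mul_zero] at hmul
      apply hone
      have := congrArg (fun w : AddMonoidAlgebra S G => w.coeff 0) hmul
      simpa [AddMonoidAlgebra.one_def] using this.symm
    obtain ⟨b, hb⟩ : ∃ b, (↑u⁻¹ : AddMonoidAlgebra S G).coeff b ≠ 0 := by
      by_contra h
      push_neg at h
      exact hv (AddMonoidAlgebra.ext (Finsupp.ext fun x => h x))
    have h0 := hmul_ne f ↑u⁻¹ g₀ b (by rw [hf₀]; exact hs₀) hb
    have h1 := hmul_ne f ↑u⁻¹ g₁ b (by rw [hf₁]; exact hs₁) hb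
    rw [hmul] at h0 h1
    have e0 : g₀ + b = 0 := by
      by_contra hne
      apply h0
      rw [AddMonoidAlgebra.one_def]
      exact Finsupp.single_eq_of_ne' (fun h => hne h.symm)
    have e1 : g₁ + b = 0 := by
      by_contra hne
      apply h1
      rw [AddMonoidAlgebra.one_def]
      exact Finsupp.single_eq_of_ne' (fun h => hne h.symm)
    exact hgg (add_right_cancel (e0.trans e1.symm))
  · intro p q hpq
    have hpne : p ≠ 0 := fun h => hfne (by rw [hpq, h, zero_mul])
    have hqne : q ≠ 0 := fun h => hfne (by rw [hpq, h, mul_zero])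
    have T : ∀ u v : G, p.coeff u ≠ 0 → q.coeff v ≠ 0 → u + v = g₀ ∨ u + v = g₁ := by
      intro u v hu' hv'
      apply hfsupp
      rw [hpq]
      exact hmul_ne p q u v hu' hv'
    have main : ∀ P Q : AddMonoidAlgebra S G, f = P * Q → P ≠ 0 →
        (∀ x, P.coeff x ≠ 0 → ∀ y, P.coeff y ≠ 0 → x = y) → IsUnit P := by
      intro P Q hPQ hP hmono
      obtain ⟨h, hh⟩ : ∃ h, P.coeff h ≠ 0 := by
        by_contra hc
        push_neg at hc
        exact hP (AddMonoidAlgebra.ext (Finsupp.ext fun x => hc x))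
      have hPs : P = AddMonoidAlgebra.single h (P.coeff h) := by
        apply AddMonoidAlgebra.ext
        apply Finsupp.ext
        intro x
        by_cases hx : P.coeff x = 0
        · rw [hx]
          show (0 : S) = Finsupp.single h (P.coeff h) x
          rw [Finsupp.single_apply]
          split_ifs with he
          · rw [he] at hh; exact absurd hx hh
          · rfl
        · have hxh := hmono x hx h hh
          subst hxh
          show P.coeff x = Finsupp.single x (P.coeff x) x
          rw [Finsupp.single_eq_same]
      have hq0 : s₀ = P.coeff h * Q.coeff (-h + g₀) := by
        rw [← hf₀, hPQ]
        conv_lhs => rw [hPs]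
        rw [AddMonoidAlgebra.coeff_single_mul_apply]
      have hq1 : s₁ = P.coeff h * Q.coeff (-h + g₁) := by
        rw [← hf₁, hPQ]
        conv_lhs => rw [hPs]
        rw [AddMonoidAlgebra.coeff_single_mul_apply]
      have hunit : IsUnit (P.coeff h) := by
        rcases hu with h₀ | h₁
        · exact isUnit_of_mul_isUnit_left (hq0 ▸ h₀)
        · exact isUnit_of_mul_isUnit_left (hq1 ▸ h₁)
      obtain ⟨v, hv⟩ := hunit
      apply IsUnit.of_mul_eq_one (a := P) (AddMonoidAlgebra.single (-h) ↑v⁻¹)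
      rw [hPs, AddMonoidAlgebra.single_mul_single, ← hv, Units.mul_inv, add_neg_cancel]
      exact AddMonoidAlgebra.one_def.symm
    by_cases hsing : ∀ x, p.coeff x ≠ 0 → ∀ y, p.coeff y ≠ 0 → x = y
    · exact Or.inl (main p q hpq hpne hsing)
    · refine Or.inr (main q p (by rw [hpq, mul_comm]) hqne ?_)
      intro x hx y hy
      by_contra hxy
      push_neg at hsing
      obtain ⟨a, ha, a', ha', haa⟩ := hsing
      have h1 := T a x ha hx
      have h2 := T a y ha hy
      have h3 := T a' x ha' hx
      have h4 := T a' y ha' hy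
      rcases h1 with h1 | h1 <;> rcases h2 with h2 | h2 <;>
        rcases h3 with h3 | h3 <;> rcases h4 with h4 | h4 <;>
        first
          | exact hxy (add_left_cancel (h1.trans h2.symm))
          | exact hxy (add_left_cancel (h3.trans h4.symm))
          | exact haa (add_right_cancel (h1.trans h3.symm))
          | exact haa (add_right_cancel (h2.trans h4.symm))
          | exact haa (aux_tors htf (h1.trans h4.symm) (h2.trans h3.symm))
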